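/- For the signed permutation matrix ẘ associated to a permutation w of [n] (with entries ±1 at positions (w(j),j) chosen so all left-justified minors are nonnegative), the identity (w⁻¹)° = δₙ (ẘ)⁻¹ δₙ holds, where δₙ = Diag(1, -1, 1, ..., (-1)^{n-1}). -/

import Mathlib

open Matrix BigOperators

noncomputable section

/-- The left-justified minor of `A` with rows the elements of `S` (in increasing order)
and columns `{0, ..., S.card - 1}`. -/
def lminor {n : ℕ} (A : Matrix (Fin n) (Fin n) ℂ) (S : Finset (Fin n)) : ℂ :=
  (A.submatrix (⇑(S.orderEmbOfFin rfl))
    (Fin.castLE (by simpa using S.card_le_univ))).det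

/-- `W` is the signed permutation matrix `ẘ` of `w`: it has entries `±1` at positions
`(w j, j)` and `0` elsewhere, and all its left-justified minors are nonnegative reals. -/
def IsSignedPermMatrix {n : ℕ} (w : Equiv.Perm (Fin n)) (W : Matrix (Fin n) (Fin n) ℂ) : Prop :=
  (∀ i j, (i = w j → W i j = 1 ∨ W i j = -1) ∧ (i ≠ w j → W i j = 0)) ∧
  ∀ S : Finset (Fin n), ∃ r : ℝ, 0 ≤ r ∧ lminor W S = (r : ℂ)

/-- The diagonal matrix `δₙ = Diag(1, -1, 1, ..., (-1)^{n-1})`. -/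
def deltaMat (n : ℕ) : Matrix (Fin n) (Fin n) ℂ :=
  Matrix.diagonal fun i => (-1 : ℂ) ^ (i : ℕ)

namespace SPM

variable {n : ℕ}

def invAt (u : Equiv.Perm (Fin n)) (j : Fin n) : ℕ :=
  (Finset.univ.filter fun i : Fin n => i < j ∧ u j < u i).card

theorem sign_eq_signAux {m : ℕ} (σ : Equiv.Perm (Fin m)) :
    Equiv.Perm.sign σ = Equiv.Perm.signAux σ := by
  induction σ using Equiv.Perm.swap_induction_on
  case one => simp [Equiv.Perm.signAux_one]
  case swap_mul f x y hxy ih =>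
    rw [Equiv.Perm.sign_mul, Equiv.Perm.signAux_mul, ih, Equiv.Perm.sign_swap hxy,
      Equiv.Perm.signAux_swap hxy]

theorem sign_complex {m : ℕ} (σ : Equiv.Perm (Fin m)) :
    ((Equiv.Perm.sign σ : ℤ) : ℂ)
      = ∏ a : Fin m, ∏ b : Fin m, if b < a ∧ σ a ≤ σ b then (-1 : ℂ) else 1 := by
  have hfp : Equiv.Perm.finPairsLT m
      = Finset.univ.filter (fun x : Σ _ : Fin m, Fin m => x.2 < x.1) := by
    ext x
    simp [Equiv.Perm.mem_finPairsLT]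
  rw [sign_eq_signAux, Equiv.Perm.signAux, hfp]
  push_cast
  rw [Finset.prod_filter]
  rw [← Finset.univ_sigma_univ, Finset.prod_sigma]
  apply Finset.prod_congr rfl; intro a _
  apply Finset.prod_congr rfl; intro b _
  by_cases h1 : b < a <;> by_cases h2 : σ a ≤ σ b <;> simp [h1, h2]

theorem det_perm_like {k : ℕ} (M : Matrix (Fin k) (Fin k) ℂ) (τ : Equiv.Perm (Fin k))
    (d : Fin k → ℂ) (hM : ∀ a b, M a b = if a = τ b then d b else 0) :
    M.det = ((Equiv.Perm.sign τ : ℤ) : ℂ) * ∏ b, d b := by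
  have h : M = (Matrix.diagonal d).submatrix (τ⁻¹ : Equiv.Perm (Fin k)) id := by
    ext a b
    rw [hM]
    by_cases hab : a = τ b
    · simp [hab, Matrix.diagonal]
    · have h2 : τ⁻¹ a ≠ b := fun h => hab (by simpa using congrArg τ h)
      simp [hab, Matrix.diagonal, show τ.symm a ≠ b from h2]
  rw [h, Matrix.det_permute, Matrix.det_diagonal, Equiv.Perm.sign_inv]

theorem filter_lt_eq_map {k : ℕ} (hk : k ≤ n) :
    (Finset.univ.filter fun j : Fin n => (j : ℕ) < k)
      = Finset.map (Fin.castLEEmb hk) Finset.univ := by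
  ext x
  simp only [Finset.mem_filter, Finset.mem_univ, true_and, Finset.mem_map,
    Fin.castLEEmb_apply]
  constructor
  · intro h; exact ⟨⟨x, h⟩, by simp [Fin.ext_iff]⟩
  · rintro ⟨b, rfl⟩; simpa using b.2

theorem prod_castLE {k : ℕ} (hk : k ≤ n) (f : Fin n → ℂ) :
    ∏ b : Fin k, f (Fin.castLE hk b)
      = ∏ j ∈ Finset.univ.filter (fun j : Fin n => (j : ℕ) < k), f j := by
  rw [filter_lt_eq_map hk, Finset.prod_map]
  rfl

theorem prod_castLE_ext {k : ℕ} (hk : k ≤ n) (f : Fin n → ℂ)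
    (h1 : ∀ i : Fin n, ¬ ((i : ℕ) < k) → f i = 1) :
    ∏ b : Fin k, f (Fin.castLE hk b) = ∏ i : Fin n, f i := by
  rw [prod_castLE hk f, Finset.prod_filter]
  apply Finset.prod_congr rfl
  intro x _
  by_cases h : (x : ℕ) < k
  · simp [h]
  · simp [h, h1 x h]

theorem prod_eq {u : Equiv.Perm (Fin n)} {A : Matrix (Fin n) (Fin n) ℂ}
    (hA : IsSignedPermMatrix u A) (k : ℕ) (hk : k ≤ n) :
    ∏ j ∈ Finset.univ.filter (fun j : Fin n => (j : ℕ) < k), A (u j) j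
      = ∏ j ∈ Finset.univ.filter (fun j : Fin n => (j : ℕ) < k), ((-1 : ℂ) ^ invAt u j) := by
  classical
  set S : Finset (Fin n) := Finset.image u (Finset.univ.filter fun i : Fin n => (i:ℕ) < k)
    with hSdef
  have hS : S.card = k := by
    rw [hSdef, Finset.card_image_of_injective _ u.injective, filter_lt_eq_map hk,
      Finset.card_map, Finset.card_univ, Fintype.card_fin]
  have hm : S.card ≤ n := hS ▸ hk
  have hmem : ∀ b : Fin S.card, u (Fin.castLE hm b) ∈ S := by
    intro b
    exact Finset.mem_image_of_mem u (by simpa using b.2.trans_le hS.le)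
  set f : Fin S.card → S := fun b => (⟨u (Fin.castLE hm b), hmem b⟩ : S) with hfdef
  have hfinj : Function.Injective f := by
    intro x y hxy
    have h2 := u.injective (congrArg Subtype.val hxy)
    exact Fin.castLE_injective hm h2
  have hbij : Function.Bijective f :=
    (Fintype.bijective_iff_injective_and_card f).2 ⟨hfinj, by simp⟩
  set τ : Equiv.Perm (Fin S.card) :=
    (Equiv.ofBijective f hbij).trans (S.orderIsoOfFin rfl).symm.toEquiv with hτdef
  have hτ : ∀ b, S.orderEmbOfFin rfl (τ b) = u (Fin.castLE hm b) := by
    intro b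
    have h3 : (S.orderIsoOfFin rfl) (τ b) = f b := by
      simp [hτdef]
    have h4 := congrArg Subtype.val h3
    rwa [Finset.coe_orderIsoOfFin_apply] at h4
  obtain ⟨r, hr0, hrm⟩ := hA.2 S
  have hdet : lminor A S
      = ((Equiv.Perm.sign τ : ℤ) : ℂ) * ∏ b, A (u (Fin.castLE hm b)) (Fin.castLE hm b) := by
    unfold lminor
    apply det_perm_like _ τ _
    intro a b
    by_cases hab : a = τ b
    · subst hab
      rw [if_pos rfl, Matrix.submatrix_apply, hτ b]
    · rw [if_neg hab, Matrix.submatrix_apply]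
      have h5 : (S.orderEmbOfFin rfl) a ≠ u (Fin.castLE hm b) := by
        rw [← hτ b]
        exact fun h => hab ((S.orderEmbOfFin rfl).injective h)
      exact (hA.1 _ _).2 h5
  set ε : ℂ := ((Equiv.Perm.sign τ : ℤ) : ℂ) with hεdef
  set P : ℂ := ∏ b, A (u (Fin.castLE hm b)) (Fin.castLE hm b) with hPdef
  have hε2 : ε * ε = 1 := by
    rcases Int.units_eq_one_or (Equiv.Perm.sign τ) with h | h <;> simp [hεdef, h]
  have hP2 : P * P = 1 := by
    rw [hPdef, ← Finset.prod_mul_distrib]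
    apply Finset.prod_eq_one
    intro b _
    rcases (hA.1 (u (Fin.castLE hm b)) (Fin.castLE hm b)).1 rfl with h | h <;> rw [h] <;> ring
  have hεP : ε * P = 1 := by
    have h1 : (ε * P) * (ε * P) = 1 := by rw [mul_mul_mul_comm, hε2, hP2, one_mul]
    rcases mul_self_eq_one_iff.1 h1 with h | h
    · exact h
    · exfalso
      rw [hdet, h] at hrm
      have : r = -1 := by exact_mod_cast hrm.symm
      linarith
  have hPε : P = ε := by
    have h1 : ε * (ε * P) = ε := by rw [hεP, mul_one]
    rw [← mul_assoc, hε2, one_mul] at h1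
    exact h1
  -- now convert both sides
  rw [← hS]
  rw [← prod_castLE hm (fun j => A (u j) j), ← prod_castLE hm (fun j => (-1 : ℂ) ^ invAt u j)]
  rw [← hPdef, hPε, hεdef, sign_complex]
  -- goal: double product = ∏ b, (-1) ^ invAt u (castLE b)
  have key : ∀ a : Fin S.card,
      (∏ b : Fin S.card, if b < a ∧ τ a ≤ τ b then (-1 : ℂ) else 1)
        = (-1 : ℂ) ^ invAt u (Fin.castLE hm a) := by
    intro a
    have hcond : ∀ b : Fin S.card,
        (if b < a ∧ τ a ≤ τ b then (-1 : ℂ) else 1)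
          = (if (Fin.castLE hm b) < (Fin.castLE hm a)
                ∧ u (Fin.castLE hm a) < u (Fin.castLE hm b) then (-1 : ℂ) else 1) := by
      intro b
      apply if_congr _ rfl rfl
      constructor
      · rintro ⟨h1, h2⟩
        refine ⟨Fin.strictMono_castLE hm h1, ?_⟩
        have hne : τ a ≠ τ b := fun h => h1.ne' (τ.injective h)
        have h3 : τ a < τ b := lt_of_le_of_ne h2 hne
        have h4 := (S.orderEmbOfFin rfl).strictMono h3
        rwa [hτ a, hτ b] at h4
      · rintro ⟨h1, h2⟩
        have h1' : b < a := by
          have := (Fin.strictMono_castLE hm).lt_iff_lt.mp h1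
          exact this
        refine ⟨h1', ?_⟩
        have h4 : S.orderEmbOfFin rfl (τ a) < S.orderEmbOfFin rfl (τ b) := by
          rw [hτ a, hτ b]; exact h2
        exact ((S.orderEmbOfFin rfl).lt_iff_lt.mp h4).le
    rw [Finset.prod_congr rfl (fun b _ => hcond b)]
    rw [prod_castLE_ext hm
      (fun i => if i < (Fin.castLE hm a) ∧ u (Fin.castLE hm a) < u i then (-1 : ℂ) else 1)]
    · rw [invAt, ← Finset.prod_filter]
      rw [Finset.prod_const]
    · intro i hi
      rw [if_neg]
      rintro ⟨h1, -⟩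
      apply hi
      have h2 : (i : ℕ) < (a : ℕ) := h1
      exact h2.trans a.isLt
  rw [Finset.prod_congr rfl (fun a _ => key a)]

theorem card_filter_lt (j : Fin n) :
    (Finset.univ.filter fun i : Fin n => i < j).card = (j : ℕ) := by
  have h : (Finset.univ.filter fun i : Fin n => i < j)
      = (Finset.univ.filter fun i : Fin n => (i : ℕ) < (j : ℕ)) := by
    ext x
    simp only [Finset.mem_filter, Finset.mem_univ, true_and]
    exact Fin.lt_def
  rw [h, filter_lt_eq_map j.isLt.le, Finset.card_map, Finset.card_univ, Fintype.card_fin]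

theorem invAt_add (w : Equiv.Perm (Fin n)) (j : Fin n) :
    invAt w⁻¹ (w j) + (j : ℕ) = ((w j : ℕ)) + invAt w j := by
  classical
  set C := Finset.univ.filter fun k : Fin n => k < j ∧ w k < w j with hC
  set D := Finset.univ.filter fun k : Fin n => j < k ∧ w k < w j with hD
  have h1 : C.card + invAt w j = (j : ℕ) := by
    rw [invAt, ← card_filter_lt j, ← Finset.card_union_of_disjoint]
    · congr 1
      ext k
      simp only [hC, Finset.mem_union, Finset.mem_filter, Finset.mem_univ, true_and]
      constructor
      · rintro (⟨h, -⟩ | ⟨h, -⟩) <;> exact h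
      · intro h
        rcases lt_or_gt_of_ne (fun hh : w k = w j => (h.ne (w.injective hh))) with h2 | h2
        · exact Or.inl ⟨h, h2⟩
        · exact Or.inr ⟨h, h2⟩
    · rw [Finset.disjoint_left]
      rintro k hk1 hk2
      simp only [hC, Finset.mem_filter, Finset.mem_univ, true_and] at hk1 hk2
      exact absurd hk2.2 (not_lt.2 hk1.2.le)
  have h2 : C.card + D.card = ((w j : ℕ)) := by
    have himg : C ∪ D = Finset.image (⇑(w⁻¹ : Equiv.Perm (Fin n)))
        (Finset.univ.filter fun i : Fin n => i < w j) := by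
      ext k
      simp only [hC, hD, Finset.mem_union, Finset.mem_filter, Finset.mem_univ, true_and,
        Finset.mem_image]
      constructor
      · rintro (⟨h, h'⟩ | ⟨h, h'⟩) <;> exact ⟨w k, h', by simp⟩
      · rintro ⟨i, hi, rfl⟩
        have hi' : w (w⁻¹ i) < w j := by simpa using hi
        have hne : (w⁻¹ : Equiv.Perm (Fin n)) i ≠ j := by
          intro hh
          rw [hh] at hi'
          exact lt_irrefl _ hi'
        rcases lt_or_gt_of_ne hne with h2 | h2
        · exact Or.inl ⟨h2, hi'⟩
        · exact Or.inr ⟨h2, hi'⟩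
    have hdisj : Disjoint C D := by
      rw [Finset.disjoint_left]
      rintro k hk1 hk2
      simp only [hC, hD, Finset.mem_filter, Finset.mem_univ, true_and] at hk1 hk2
      exact absurd hk2.1 (not_lt.2 hk1.1.le)
    rw [← Finset.card_union_of_disjoint hdisj, himg,
      Finset.card_image_of_injective _ (w⁻¹ : Equiv.Perm (Fin n)).injective, card_filter_lt]
  have h3 : invAt w⁻¹ (w j) = D.card := by
    rw [invAt]
    have himg : (Finset.univ.filter fun i : Fin n => i < w j ∧ w⁻¹ (w j) < w⁻¹ i)
        = Finset.image (⇑w) D := by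
      ext i
      simp only [hD, Finset.mem_filter, Finset.mem_univ, true_and, Finset.mem_image]
      constructor
      · rintro ⟨h, h'⟩
        refine ⟨w⁻¹ i, ⟨by simpa using h', by simpa using h⟩, by simp⟩
      · rintro ⟨k, ⟨hk1, hk2⟩, rfl⟩
        exact ⟨hk2, by simpa using hk1⟩
    rw [himg, Finset.card_image_of_injective _ w.injective]
  omega


theorem entry_eq {n : ℕ} {u : Equiv.Perm (Fin n)} {A : Matrix (Fin n) (Fin n) ℂ}
    (hA : IsSignedPermMatrix u A) (j : Fin n) :
    A (u j) j = (-1 : ℂ) ^ invAt u j := by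
  have h1 := prod_eq hA ((j : ℕ) + 1) (Nat.succ_le_of_lt j.isLt)
  have h2 := prod_eq hA (j : ℕ) j.isLt.le
  have hins : (Finset.univ.filter fun i : Fin n => (i : ℕ) < (j : ℕ) + 1)
      = insert j (Finset.univ.filter fun i : Fin n => (i : ℕ) < (j : ℕ)) := by
    ext x
    simp only [Finset.mem_filter, Finset.mem_univ, true_and, Finset.mem_insert, Fin.ext_iff]
    omega
  have hj : j ∉ (Finset.univ.filter fun i : Fin n => (i : ℕ) < (j : ℕ)) := by simp
  rw [hins, Finset.prod_insert hj, Finset.prod_insert hj, h2] at h1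
  have hne : (∏ i ∈ Finset.univ.filter (fun i : Fin n => (i : ℕ) < (j : ℕ)),
      ((-1 : ℂ) ^ invAt u i)) ≠ 0 := by
    apply Finset.prod_ne_zero_iff.2
    intro i _
    exact pow_ne_zero _ (by norm_num)
  exact mul_right_cancel₀ hne h1

theorem inv_eq_transpose {n : ℕ} {u : Equiv.Perm (Fin n)} {A : Matrix (Fin n) (Fin n) ℂ}
    (hA : IsSignedPermMatrix u A) : A⁻¹ = Aᵀ := by
  have h : A * Aᵀ = 1 := by
    ext i k
    rw [Matrix.mul_apply]
    rw [Finset.sum_eq_single ((u⁻¹ : Equiv.Perm (Fin n)) i)]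
    · by_cases hik : i = k
      · subst hik
        rcases (hA.1 i (u⁻¹ i)).1 (by simp) with h | h <;> simp only [Equiv.Perm.inv_def] at h <;>
          simp [Matrix.transpose_apply, h, Matrix.one_apply]
      · have h0 : A k (u⁻¹ i) = 0 := by
          apply (hA.1 _ _).2
          simpa using (Ne.symm hik)
        simp [Matrix.transpose_apply, show A k (u.symm i) = 0 from h0, Matrix.one_apply, hik]
    · intro b _ hb
      have h0 : A i b = 0 := by
        apply (hA.1 _ _).2
        intro hh
        exact hb (by simp [hh])
      simp [h0]
    · simp
  exact Matrix.inv_eq_right_inv h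

end SPM

/-- `(w⁻¹)° = δₙ ẘ⁻¹ δₙ`. -/
theorem stmt0 {n : ℕ} (w : Equiv.Perm (Fin n)) (W W' : Matrix (Fin n) (Fin n) ℂ)
    (hW : IsSignedPermMatrix w W) (hW' : IsSignedPermMatrix w⁻¹ W') :
    W' = deltaMat n * W⁻¹ * deltaMat n := by
  rw [SPM.inv_eq_transpose hW]
  ext i j
  rw [deltaMat, Matrix.mul_diagonal, Matrix.diagonal_mul, Matrix.transpose_apply]
  by_cases h : i = (w⁻¹ : Equiv.Perm (Fin n)) j
  · subst h
    have hL : W' ((w⁻¹ : Equiv.Perm (Fin n)) j) j = (-1 : ℂ) ^ SPM.invAt w⁻¹ j :=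
      SPM.entry_eq hW' j
    have hR : W j ((w⁻¹ : Equiv.Perm (Fin n)) j) = (-1 : ℂ) ^ SPM.invAt w (w⁻¹ j) := by
      have := SPM.entry_eq hW ((w⁻¹ : Equiv.Perm (Fin n)) j)
      rwa [← Equiv.Perm.mul_apply, mul_inv_cancel, Equiv.Perm.one_apply] at this
    rw [hL, hR]
    have hE : SPM.invAt w⁻¹ j + ((w⁻¹ : Equiv.Perm (Fin n)) j : ℕ)
        = (j : ℕ) + SPM.invAt w (w⁻¹ j) := by
      have := SPM.invAt_add w ((w⁻¹ : Equiv.Perm (Fin n)) j)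
      rwa [← Equiv.Perm.mul_apply, mul_inv_cancel, Equiv.Perm.one_apply] at this
    have key : ((-1 : ℂ)) ^ (SPM.invAt w⁻¹ j + ((w⁻¹ : Equiv.Perm (Fin n)) j : ℕ))
        = (-1 : ℂ) ^ ((j : ℕ) + SPM.invAt w (w⁻¹ j)) := by rw [hE]
    rw [pow_add, pow_add] at key
    have hCC : ((-1 : ℂ)) ^ (((w⁻¹ : Equiv.Perm (Fin n)) j : ℕ))
        * ((-1 : ℂ)) ^ (((w⁻¹ : Equiv.Perm (Fin n)) j : ℕ)) = 1 := by
      rw [← pow_add]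
      exact Even.neg_one_pow ⟨_, rfl⟩
    calc (-1 : ℂ) ^ SPM.invAt w⁻¹ j
        = ((-1 : ℂ) ^ SPM.invAt w⁻¹ j * (-1 : ℂ) ^ (((w⁻¹ : Equiv.Perm (Fin n)) j : ℕ)))
          * (-1 : ℂ) ^ (((w⁻¹ : Equiv.Perm (Fin n)) j : ℕ)) := by
          rw [mul_assoc, hCC, mul_one]
      _ = ((-1 : ℂ) ^ (j : ℕ) * (-1 : ℂ) ^ SPM.invAt w (w⁻¹ j))
          * (-1 : ℂ) ^ (((w⁻¹ : Equiv.Perm (Fin n)) j : ℕ)) := by rw [key]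
      _ = (-1 : ℂ) ^ (((w⁻¹ : Equiv.Perm (Fin n)) j : ℕ))
          * (-1 : ℂ) ^ SPM.invAt w (w⁻¹ j) * (-1 : ℂ) ^ (j : ℕ) := by ring
  · have hL : W' i j = 0 := (hW'.1 _ _).2 h
    have hR : W j i = 0 := by
      apply (hW.1 _ _).2
      intro hh
      exact h (by rw [hh]; simp)
    rw [hL, hR]
    ring
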